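/- arXiv:1710.07755 — 2 statements merged into one kernel-verified Lean document; each statement's English description precedes it below -/
import Mathlib

section
/- Let D > 0, let V : ℝ → ℝ be continuous, and let p : ℝ → ℝ be twice continuously differentiable with compact support. Then for every q ∈ ℝ, lim_{ε→0⁺} (1/ε) · [ (2πDε)^{−1/2} ∫_ℝ exp(−(q−u)²/(2Dε)) · exp(−ε V(u)) · p(u) du − p(q) ] = (D/2) p″(q) − V(q) p(q). In other words, the infinitesimal Bayesian update with Gaussian transition density and exponential likelihood generates the imaginary-time Schrödinger equation −∂p/∂t = (−(D/2) ∂²/∂q² + V) p. -/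
open MeasureTheory Real Filter Topology
open Set

set_option maxHeartbeats 1000000

lemma integrable_exp_half : Integrable (fun y : ℝ => Real.exp (-(1/2) * y^2)) :=
  integrable_exp_neg_mul_sq (by norm_num)

lemma integrable_id_mul_exp_half : Integrable (fun y : ℝ => y * Real.exp (-(1/2) * y^2)) :=
  integrable_mul_exp_neg_mul_sq (by norm_num)

lemma integrable_sq_mul_exp_half : Integrable (fun y : ℝ => y^2 * Real.exp (-(1/2) * y^2)) := by
  have h := integrable_rpow_mul_exp_neg_mul_sq (b := 1/2) (by norm_num) (s := 2) (by norm_num)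
  simpa [Real.rpow_two] using h

lemma integral_exp_half : ∫ y : ℝ, Real.exp (-(1/2) * y^2) = Real.sqrt (2*π) := by
  rw [integral_gaussian]
  congr 1
  rw [div_div_eq_mul_div, div_one, mul_comm]

lemma tendsto_exp_half_atTop : Tendsto (fun y : ℝ => Real.exp (-(1/2) * y^2)) atTop (𝓝 0) :=
  Real.tendsto_exp_atBot.comp
    ((tendsto_pow_atTop two_ne_zero).const_mul_atTop_of_neg (by norm_num))

lemma tendsto_exp_half_atBot : Tendsto (fun y : ℝ => Real.exp (-(1/2) * y^2)) atBot (𝓝 0) := by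
  have h := tendsto_exp_half_atTop.comp tendsto_neg_atBot_atTop
  exact h.congr fun y => by simp [Function.comp]

lemma integral_id_mul_exp_half : ∫ y : ℝ, y * Real.exp (-(1/2) * y^2) = 0 := by
  have hderiv : ∀ x : ℝ, HasDerivAt (fun y : ℝ => -Real.exp (-(1/2) * y^2))
      (x * Real.exp (-(1/2) * x^2)) x := by
    intro x
    have h := (((hasDerivAt_pow 2 x).const_mul (-(1/2):ℝ)).exp).neg
    refine h.congr_deriv ?_
    simp
    ring
  have := integral_of_hasDerivAt_of_tendsto hderiv integrable_id_mul_exp_half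
    tendsto_exp_half_atBot.neg tendsto_exp_half_atTop.neg
  simpa using this

lemma tendsto_id_mul_exp_half_atTop :
    Tendsto (fun y : ℝ => y * Real.exp (-(1/2) * y^2)) atTop (𝓝 0) := by
  have h := rpow_mul_exp_neg_mul_sq_isLittleO_exp_neg (b := (1/2:ℝ)) (by norm_num) 1
  have h2 : Tendsto (fun x : ℝ => Real.exp (-(1/2) * x)) atTop (𝓝 0) :=
    Real.tendsto_exp_atBot.comp (tendsto_id.const_mul_atTop_of_neg (by norm_num))
  have := h.trans_tendsto h2
  simpa [Real.rpow_one] using this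

lemma tendsto_neg_id_mul_exp_half_atBot :
    Tendsto (fun y : ℝ => -y * Real.exp (-(1/2) * y^2)) atBot (𝓝 0) := by
  have h := tendsto_id_mul_exp_half_atTop.comp tendsto_neg_atBot_atTop
  exact h.congr fun y => by simp [Function.comp]

lemma tendsto_neg_id_mul_exp_half_atTop :
    Tendsto (fun y : ℝ => -y * Real.exp (-(1/2) * y^2)) atTop (𝓝 0) := by
  have h2 := tendsto_id_mul_exp_half_atTop.neg
  rw [neg_zero] at h2
  exact h2.congr fun y => by ring

lemma integral_sq_mul_exp_half : ∫ y : ℝ, y^2 * Real.exp (-(1/2) * y^2) = Real.sqrt (2*π) := by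
  have hderiv : ∀ x : ℝ, HasDerivAt (fun y : ℝ => -y * Real.exp (-(1/2) * y^2))
      ((x^2 - 1) * Real.exp (-(1/2) * x^2)) x := by
    intro x
    have h := ((hasDerivAt_id x).neg.mul (((hasDerivAt_pow 2 x).const_mul (-(1/2):ℝ)).exp))
    refine h.congr_deriv ?_
    simp
    ring
  have hint : Integrable (fun x : ℝ => (x^2 - 1) * Real.exp (-(1/2) * x^2)) := by
    have := integrable_sq_mul_exp_half.sub integrable_exp_half
    refine this.congr (Filter.Eventually.of_forall fun x => ?_)
    simp only [Pi.sub_apply]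
    ring
  have h0 := integral_of_hasDerivAt_of_tendsto hderiv hint
    tendsto_neg_id_mul_exp_half_atBot tendsto_neg_id_mul_exp_half_atTop
  have hsub : ∫ x : ℝ, (x^2 - 1) * Real.exp (-(1/2) * x^2)
      = (∫ x : ℝ, x^2 * Real.exp (-(1/2) * x^2)) - ∫ x : ℝ, Real.exp (-(1/2) * x^2) := by
    rw [← integral_sub integrable_sq_mul_exp_half integrable_exp_half]
    congr 1
    funext x
    ring
  have : (∫ x : ℝ, x^2 * Real.exp (-(1/2) * x^2)) - ∫ x : ℝ, Real.exp (-(1/2) * x^2) = 0 := by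
    rw [← hsub, h0]
    · simp
  rw [integral_exp_half] at this
  linarith

lemma second_taylor_tendsto (p : ℝ → ℝ) (hp : ContDiff ℝ 2 p) (q : ℝ) :
    Tendsto (fun h : ℝ => (p (q + h) - p q - h * deriv p q) / h^2) (𝓝[≠] (0:ℝ))
      (𝓝 (deriv (deriv p) q / 2)) := by
  have h2 : ContDiff ℝ (1+1 : WithTop ℕ∞) p := by
    rw [show ((1:WithTop ℕ∞)+1) = 2 from by norm_num]; exact hp
  have hp1 : Differentiable ℝ p := (contDiff_succ_iff_deriv.mp h2).1
  have hp2 : Differentiable ℝ (deriv p) :=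
    ((contDiff_succ_iff_deriv.mp h2).2.2).differentiable one_ne_zero
  set f : ℝ → ℝ := fun h => p (q + h) - p q - h * deriv p q with hf
  set f' : ℝ → ℝ := fun h => deriv p (q + h) - deriv p q with hf'
  have hff' : ∀ᶠ x in 𝓝 (0:ℝ), HasDerivAt f (f' x) x := by
    refine Eventually.of_forall fun x => ?_
    have h1 : HasDerivAt (fun h : ℝ => p (q + h)) (deriv p (q + x)) x := by
      have := (hp1 (q + x)).hasDerivAt.comp x ((hasDerivAt_id x).const_add q)
      simpa [Function.comp_def] using this
    exact (h1.sub_const (p q)).sub (hasDerivAt_mul_const (deriv p q))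
  have hgg' : ∀ᶠ x in 𝓝 (0:ℝ), HasDerivAt (fun h : ℝ => h^2) (2*x) x := by
    refine Eventually.of_forall fun x => ?_
    simpa using hasDerivAt_pow 2 x
  have hg' : ∀ᶠ x in 𝓝[≠] (0:ℝ), 2*x ≠ 0 := by
    filter_upwards [self_mem_nhdsWithin] with x hx
    simpa using hx
  have hfa : Tendsto f (𝓝 (0:ℝ)) (𝓝 0) := by
    have hc : Continuous f := by
      apply Continuous.sub
      · exact (hp1.continuous.comp (continuous_const.add continuous_id)).sub continuous_const
      · exact continuous_id.mul continuous_const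
    have := hc.tendsto 0
    simpa [hf] using this
  have hga : Tendsto (fun h : ℝ => h^2) (𝓝 (0:ℝ)) (𝓝 0) := by
    have := (continuous_pow 2 (M := ℝ)).tendsto 0
    simpa using this
  have hdiv : Tendsto (fun x => f' x / (2*x)) (𝓝[≠] (0:ℝ)) (𝓝 (deriv (deriv p) q / 2)) := by
    have hd : HasDerivAt (deriv p) (deriv (deriv p) q) q := (hp2 q).hasDerivAt
    have hslope := hasDerivAt_iff_tendsto_slope.mp hd
    have hmap : Tendsto (fun h : ℝ => q + h) (𝓝[≠] (0:ℝ)) (𝓝[≠] q) := by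
      rw [tendsto_nhdsWithin_iff]
      constructor
      · have h0 : Tendsto (fun h : ℝ => q + h) (𝓝 (0:ℝ)) (𝓝 (q + 0)) :=
          (continuous_const.add continuous_id).tendsto 0
        rw [add_zero] at h0
        exact h0.mono_left nhdsWithin_le_nhds
      · filter_upwards [self_mem_nhdsWithin] with x hx
        simp only [mem_compl_iff, mem_singleton_iff] at hx ⊢
        intro hc; exact hx (by linarith)
    have hcomp := hslope.comp hmap
    have := hcomp.div_const 2
    refine this.congr fun x => ?_
    simp only [Function.comp_apply, slope_def_field, add_sub_cancel_left, hf']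
    rw [div_div, mul_comm]
  exact HasDerivAt.lhopital_zero_nhdsNE
    (eventually_nhdsWithin_of_eventually_nhds hff')
    (eventually_nhdsWithin_of_eventually_nhds hgg') hg'
    (hfa.mono_left nhdsWithin_le_nhds) (hga.mono_left nhdsWithin_le_nhds) hdiv

lemma taylor_bound (p : ℝ → ℝ) (hp1 : Differentiable ℝ p) (hp2 : Differentiable ℝ (deriv p))
    {M : ℝ} (hM : ∀ x, ‖deriv (deriv p) x‖ ≤ M) (q h : ℝ) :
    |p (q + h) - p q - h * deriv p q| ≤ M * h^2 := by
  have lip : ∀ a b : ℝ, |deriv p a - deriv p b| ≤ M * |a - b| := by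
    intro a b
    have := Convex.norm_image_sub_le_of_norm_deriv_le (f := deriv p) (s := univ)
      (fun x _ => hp2 x) (fun x _ => hM x) convex_univ (mem_univ b) (mem_univ a)
    simpa [Real.norm_eq_abs] using this
  set g : ℝ → ℝ := fun t => p (q + t) - t * deriv p q with hgdef
  have hg : ∀ t : ℝ, HasDerivAt g (deriv p (q + t) - deriv p q) t := by
    intro t
    have h1 : HasDerivAt (fun t : ℝ => p (q + t)) (deriv p (q + t)) t := by
      have := (hp1 (q + t)).hasDerivAt.comp t ((hasDerivAt_id t).const_add q)
      simpa [Function.comp_def] using this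
    exact h1.sub (hasDerivAt_mul_const (deriv p q))
  have key : ‖g h - g 0‖ ≤ M * |h| * ‖h - 0‖ := by
    refine (convex_uIcc (0:ℝ) h).norm_image_sub_le_of_norm_hasDerivWithin_le
      (fun t _ => (hg t).hasDerivWithinAt) (fun t ht => ?_) left_mem_uIcc right_mem_uIcc
    have habs : |t| ≤ |h| := by
      rcases Set.mem_uIcc.mp ht with ⟨h1, h2⟩ | ⟨h1, h2⟩ <;> rw [abs_le] <;>
        constructor <;> linarith [neg_abs_le h, le_abs_self h, abs_nonneg h]
    have hM0 : 0 ≤ M := le_trans (norm_nonneg _) (hM 0)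
    calc ‖deriv p (q + t) - deriv p q‖ ≤ M * |(q + t) - q| := by
          simpa [Real.norm_eq_abs] using lip (q + t) q
      _ = M * |t| := by rw [add_sub_cancel_left]
      _ ≤ M * |h| := mul_le_mul_of_nonneg_left habs hM0
  have hgeq : g h - g 0 = p (q + h) - p q - h * deriv p q := by
    simp only [hgdef]
    simp
    ring
  rw [hgeq, Real.norm_eq_abs, sub_zero] at key
  calc |p (q + h) - p q - h * deriv p q| ≤ M * |h| * |h| := key
    _ = M * h^2 := by rw [mul_assoc, abs_mul_abs_self, ← sq]

/-- The infinitesimal Bayesian update with Gaussian transition density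
`(2πDε)^{-1/2} exp(-(q-u)²/(2Dε))` and exponential likelihood `exp(-εV(u))` generates
the imaginary-time Schrödinger equation: for continuous `V` and `p` twice continuously
differentiable with compact support,
`lim_{ε→0⁺} ε⁻¹ [(2πDε)^{-1/2} ∫ exp(-(q-u)²/(2Dε)) exp(-εV(u)) p(u) du - p(q)]
  = (D/2) p''(q) - V(q) p(q)`. -/
theorem infinitesimal_bayesian_update_generator
    (D : ℝ) (hD : 0 < D) (V : ℝ → ℝ) (hV : Continuous V)
    (p : ℝ → ℝ) (hp : ContDiff ℝ 2 p) (hsupp : HasCompactSupport p) (q : ℝ) :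
    Tendsto
      (fun ε : ℝ => (1 / ε) *
        ((2 * π * D * ε) ^ (-(1 : ℝ) / 2) *
            (∫ u : ℝ, Real.exp (-(q - u) ^ 2 / (2 * D * ε)) *
              Real.exp (-(ε * V u)) * p u) - p q))
      (𝓝[>] 0)
      (𝓝 (D / 2 * deriv (deriv p) q - V q * p q)) := by
  -- basic constants and regularity facts
  obtain ⟨Cp, hCp⟩ := hsupp.exists_bound_of_continuous hp.continuous
  have hCp0 : 0 ≤ Cp := le_trans (norm_nonneg (p 0)) (hCp 0)
  have h2 : ContDiff ℝ (1 + 1 : WithTop ℕ∞) p := by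
    rw [show ((1 : WithTop ℕ∞) + 1) = 2 from by norm_num]; exact hp
  have hp1 : Differentiable ℝ p := (contDiff_succ_iff_deriv.mp h2).1
  have hpd : ContDiff ℝ 1 (deriv p) := (contDiff_succ_iff_deriv.mp h2).2.2
  have hp2 : Differentiable ℝ (deriv p) := hpd.differentiable one_ne_zero
  have hp2c : Continuous (deriv (deriv p)) := (contDiff_one_iff_deriv.mp hpd).2
  have hsupp2 : HasCompactSupport (deriv (deriv p)) := hsupp.deriv.deriv
  obtain ⟨M, hM⟩ := hsupp2.exists_bound_of_continuous hp2c
  have hM0 : 0 ≤ M := le_trans (norm_nonneg _) (hM 0)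
  obtain ⟨CV0, hCV0⟩ :=
    (hsupp : IsCompact (tsupport p)).exists_bound_of_continuousOn hV.continuousOn
  set CV := max CV0 0 with hCVdef
  have hCV : ∀ x ∈ tsupport p, |V x| ≤ CV := fun x hx =>
    le_trans (le_trans (le_of_eq (Real.norm_eq_abs (V x)).symm) (hCV0 x hx)) (le_max_left _ _)
  have hCVnn : (0:ℝ) ≤ CV := le_max_right _ _
  have h2π : (0:ℝ) < 2 * π := by positivity
  have hsq2π : Real.sqrt (2 * π) ≠ 0 := ne_of_gt (Real.sqrt_pos.mpr h2π)
  set c : ℝ := (Real.sqrt (2 * π))⁻¹ with hc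
  have hcpos : 0 < c := inv_pos.mpr (Real.sqrt_pos.mpr h2π)
  have hcsqrt : c * Real.sqrt (2 * π) = 1 := inv_mul_cancel₀ hsq2π
  set σ : ℝ → ℝ := fun ε => Real.sqrt (D * ε) with hσ
  have hσc : Continuous σ := Real.continuous_sqrt.comp (continuous_const.mul continuous_id)
  have hσ0 : Tendsto σ (𝓝[>] (0:ℝ)) (𝓝 0) := by
    have h0 := hσc.tendsto 0
    have : σ 0 = 0 := by simp [hσ]
    rw [this] at h0
    exact h0.mono_left nhdsWithin_le_nhds
  have hσy : ∀ y : ℝ, Tendsto (fun ε => σ ε * y) (𝓝[>] (0:ℝ)) (𝓝 0) := by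
    intro y
    have := hσ0.mul_const y
    rwa [zero_mul] at this
  have hqy : ∀ y : ℝ, Tendsto (fun ε => q + σ ε * y) (𝓝[>] (0:ℝ)) (𝓝 q) := by
    intro y
    have := (hσy y).const_add q
    rwa [add_zero] at this
  set F : ℝ → ℝ → ℝ := fun ε y => (1/ε) * (c * Real.exp (-(1/2) * y^2) *
      (Real.exp (-(ε * V (q + σ ε * y))) * p (q + σ ε * y) - p q - σ ε * y * deriv p q))
    with hF
  set L : ℝ → ℝ := fun y => c * Real.exp (-(1/2) * y^2) *
      (D/2 * y^2 * deriv (deriv p) q - V q * p q) with hL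
  -- pointwise limits
  have hA : ∀ y : ℝ, Tendsto (fun ε => (1/ε) * (p (q + σ ε * y) - p q - σ ε * y * deriv p q))
      (𝓝[>] (0:ℝ)) (𝓝 (D/2 * y^2 * deriv (deriv p) q)) := by
    intro y
    rcases eq_or_ne y 0 with rfl | hy
    · have hfun : (fun ε : ℝ => (1/ε) * (p (q + σ ε * 0) - p q - σ ε * 0 * deriv p q))
          = fun _ => (0:ℝ) := by
        funext ε; simp
      rw [hfun]
      simpa using (tendsto_const_nhds : Tendsto (fun _ : ℝ => (0:ℝ)) (𝓝[>] (0:ℝ)) (𝓝 0))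
    · have hcomp : Tendsto (fun ε => σ ε * y) (𝓝[>] (0:ℝ)) (𝓝[≠] (0:ℝ)) := by
        rw [tendsto_nhdsWithin_iff]
        refine ⟨hσy y, ?_⟩
        filter_upwards [self_mem_nhdsWithin] with ε hε
        have hσpos : 0 < σ ε := Real.sqrt_pos.mpr (mul_pos hD hε)
        simp only [mem_compl_iff, mem_singleton_iff]
        exact mul_ne_zero (ne_of_gt hσpos) hy
      have hT := (second_taylor_tendsto p hp q).comp hcomp
      have hT2 := hT.const_mul (D * y^2)
      rw [show D * y^2 * (deriv (deriv p) q / 2) = D/2 * y^2 * deriv (deriv p) q from by ring]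
        at hT2
      refine hT2.congr' ?_
      filter_upwards [self_mem_nhdsWithin] with ε hε
      have hεpos : (0:ℝ) < ε := hε
      have hsq : (σ ε * y)^2 = D * ε * y^2 := by
        rw [mul_pow, hσ]
        simp only
        rw [Real.sq_sqrt (mul_pos hD hεpos).le]
      simp only [Function.comp_apply]
      rw [hsq]
      field_simp
  have hB : ∀ y : ℝ, Tendsto
      (fun ε => (1/ε) * (p (q + σ ε * y) * (Real.exp (-(ε * V (q + σ ε * y))) - 1)))
      (𝓝[>] (0:ℝ)) (𝓝 (-(p q * V q))) := by
    intro y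
    have hwt : Tendsto (fun ε => V (q + σ ε * y)) (𝓝[>] (0:ℝ)) (𝓝 (V q)) :=
      (hV.tendsto q).comp (hqy y)
    have hpt : Tendsto (fun ε => p (q + σ ε * y)) (𝓝[>] (0:ℝ)) (𝓝 (p q)) :=
      (hp.continuous.tendsto q).comp (hqy y)
    have habs : ∀ᶠ ε in 𝓝[>] (0:ℝ), |V (q + σ ε * y)| ≤ |V q| + 1 := by
      have hd := Metric.tendsto_nhds.mp hwt 1 one_pos
      filter_upwards [hd] with ε hε
      rw [Real.dist_eq] at hε
      have := abs_sub_abs_le_abs_sub (V (q + σ ε * y)) (V q)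
      linarith
    have hsmall : ∀ᶠ ε in 𝓝[>] (0:ℝ), ε * (|V q| + 1) ≤ 1 ∧ (0:ℝ) < ε := by
      have hmem : Ioo (0:ℝ) ((|V q| + 1)⁻¹) ∈ 𝓝[>] (0:ℝ) :=
        Ioo_mem_nhdsGT (by positivity)
      filter_upwards [hmem] with ε hε
      have h1 : (0:ℝ) < |V q| + 1 := by positivity
      refine ⟨?_, hε.1⟩
      have := (lt_div_iff₀ h1).mp (by rw [one_div]; exact hε.2)
      linarith
    have hrem : Tendsto
        (fun ε => (Real.exp (-(ε * V (q + σ ε * y))) - 1 + ε * V (q + σ ε * y))/ε)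
        (𝓝[>] (0:ℝ)) (𝓝 0) := by
      apply squeeze_zero_norm' (a := fun ε => ε * (|V q| + 1)^2)
      · filter_upwards [habs, hsmall] with ε h1 h2
        have hεpos : (0:ℝ) < ε := h2.2
        have hx : |(-(ε * V (q + σ ε * y)))| ≤ 1 := by
          rw [abs_neg, abs_mul, abs_of_pos hεpos]
          calc ε * |V (q + σ ε * y)| ≤ ε * (|V q| + 1) :=
                mul_le_mul_of_nonneg_left h1 hεpos.le
            _ ≤ 1 := h2.1
        have hb := Real.abs_exp_sub_one_sub_id_le hx
        have hb' : |Real.exp (-(ε * V (q + σ ε * y))) - 1 + ε * V (q + σ ε * y)|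
            ≤ (ε * V (q + σ ε * y))^2 := by
          have heqq : Real.exp (-(ε * V (q + σ ε * y))) - 1 - (-(ε * V (q + σ ε * y)))
              = Real.exp (-(ε * V (q + σ ε * y))) - 1 + ε * V (q + σ ε * y) := by ring
          have heqq2 : (-(ε * V (q + σ ε * y)))^2 = (ε * V (q + σ ε * y))^2 := by ring
          rwa [heqq, heqq2] at hb
        have hw2 : (V (q + σ ε * y))^2 ≤ (|V q| + 1)^2 := by
          nlinarith [sq_abs (V (q + σ ε * y)), abs_nonneg (V (q + σ ε * y))]
        rw [Real.norm_eq_abs, abs_div, abs_of_pos hεpos, div_le_iff₀ hεpos]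
        nlinarith [hb', hw2, sq_nonneg ε, hεpos.le]
      · have h0 : Tendsto (fun ε : ℝ => ε * (|V q| + 1)^2) (𝓝 (0:ℝ))
            (𝓝 (0 * (|V q| + 1)^2)) := tendsto_id.mul_const _
        rw [zero_mul] at h0
        exact h0.mono_left nhdsWithin_le_nhds
    have hcomb := (hpt.mul hwt.neg).add (hpt.mul hrem)
    rw [mul_zero, add_zero, show p q * -V q = -(p q * V q) from by ring] at hcomb
    refine hcomb.congr' ?_
    filter_upwards [self_mem_nhdsWithin] with ε hε
    have hεne : (ε:ℝ) ≠ 0 := ne_of_gt hε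
    field_simp
    ring
  have h_lim : ∀ y : ℝ, Tendsto (fun ε => F ε y) (𝓝[>] (0:ℝ)) (𝓝 (L y)) := by
    intro y
    have hsum := ((hA y).add (hB y)).const_mul (c * Real.exp (-(1/2) * y^2))
    rw [show c * Real.exp (-(1/2) * y^2) *
        (D/2 * y^2 * deriv (deriv p) q + -(p q * V q)) = L y from by
      simp only [hL]; ring] at hsum
    refine hsum.congr fun ε => ?_
    simp only [hF]
    ring
  -- measurability
  have hFmeas : ∀ ε : ℝ, AEStronglyMeasurable (F ε) volume := by
    intro ε
    apply Continuous.aestronglyMeasurable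
    have c0 : Continuous fun y : ℝ => q + σ ε * y :=
      continuous_const.add (continuous_const.mul continuous_id)
    have cE : Continuous fun y : ℝ => Real.exp (-(ε * V (q + σ ε * y))) :=
      Real.continuous_exp.comp ((continuous_const.mul (hV.comp c0)).neg)
    have cP : Continuous fun y : ℝ => p (q + σ ε * y) := hp.continuous.comp c0
    have cG : Continuous fun y : ℝ => Real.exp (-(1/2) * y^2) :=
      Real.continuous_exp.comp (continuous_const.mul (continuous_pow 2))
    simp only [hF]
    exact continuous_const.mul ((continuous_const.mul cG).mul
      (((cE.mul cP).sub continuous_const).sub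
        ((continuous_const.mul continuous_id).mul continuous_const)))
  -- domination
  set bound : ℝ → ℝ := fun y => c * Real.exp (-(1/2) * y^2) * (M * D * y^2 + 2 * Cp * CV)
    with hbd
  have hboundint : Integrable bound := by
    have h1 : Integrable (fun y : ℝ => (c * (M * D)) * (y^2 * Real.exp (-(1/2) * y^2))) :=
      integrable_sq_mul_exp_half.const_mul _
    have h2' : Integrable (fun y : ℝ => (c * (2 * Cp * CV)) * Real.exp (-(1/2) * y^2)) :=
      integrable_exp_half.const_mul _
    refine (h1.add h2').congr (Eventually.of_forall fun y => ?_)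
    simp only [hbd, Pi.add_apply]
    ring
  have h_bound : ∀ᶠ ε in 𝓝[>] (0:ℝ), ∀ᵐ y : ℝ, ‖F ε y‖ ≤ bound y := by
    have hmem : Ioo (0:ℝ) ((CV + 1)⁻¹) ∈ 𝓝[>] (0:ℝ) := Ioo_mem_nhdsGT (by positivity)
    filter_upwards [hmem] with ε hε
    refine Eventually.of_forall fun y => ?_
    have hεpos : (0:ℝ) < ε := hε.1
    have hεCV : ε * CV ≤ 1 := by
      have h1 : (0:ℝ) < CV + 1 := by positivity
      have h2' := (lt_div_iff₀ h1).mp (by rw [one_div]; exact hε.2)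
      nlinarith
    have hσpos : 0 < σ ε := Real.sqrt_pos.mpr (mul_pos hD hεpos)
    have hσsq : (σ ε)^2 = D * ε := by
      rw [hσ]; simp only; exact Real.sq_sqrt (mul_pos hD hεpos).le
    have hterm1 : |p (q + σ ε * y) * (Real.exp (-(ε * V (q + σ ε * y))) - 1)|
        ≤ 2 * Cp * CV * ε := by
      rcases eq_or_ne (p (q + σ ε * y)) 0 with hz | hz
      · rw [hz, zero_mul, abs_zero]; positivity
      · have hmem2 : q + σ ε * y ∈ tsupport p :=
          subset_tsupport p (Function.mem_support.mpr hz)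
        have hVb : |V (q + σ ε * y)| ≤ CV := hCV _ hmem2
        have hxb : |(-(ε * V (q + σ ε * y)))| ≤ 1 := by
          rw [abs_neg, abs_mul, abs_of_pos hεpos]
          calc ε * |V (q + σ ε * y)| ≤ ε * CV := mul_le_mul_of_nonneg_left hVb hεpos.le
            _ ≤ 1 := hεCV
        have hexp := Real.abs_exp_sub_one_le hxb
        rw [abs_neg, abs_mul, abs_of_pos hεpos] at hexp
        have hpb : |p (q + σ ε * y)| ≤ Cp := by
          have := hCp (q + σ ε * y); rwa [Real.norm_eq_abs] at this
        rw [abs_mul]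
        have hEb : |Real.exp (-(ε * V (q + σ ε * y))) - 1| ≤ 2 * (ε * CV) := by
          nlinarith [hVb, hεpos]
        nlinarith [abs_nonneg (p (q + σ ε * y)),
          abs_nonneg (Real.exp (-(ε * V (q + σ ε * y))) - 1), hpb, hCp0, hεpos]
    have hterm2 : |p (q + σ ε * y) - p q - σ ε * y * deriv p q| ≤ M * D * ε * y^2 := by
      have ht := taylor_bound p hp1 hp2 hM q (σ ε * y)
      calc |p (q + σ ε * y) - p q - σ ε * y * deriv p q| ≤ M * (σ ε * y)^2 := ht
        _ = M * D * ε * y^2 := by rw [mul_pow, hσsq]; ring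
    have hFy : ‖F ε y‖ = (1/ε) * (c * Real.exp (-(1/2) * y^2)) *
        |Real.exp (-(ε * V (q + σ ε * y))) * p (q + σ ε * y) - p q
          - σ ε * y * deriv p q| := by
      simp only [hF, Real.norm_eq_abs, abs_mul]
      rw [abs_of_pos (by positivity : (0:ℝ) < 1/ε), abs_of_pos hcpos,
        abs_of_pos (Real.exp_pos _)]
      ring
    rw [hFy]
    have htri : |Real.exp (-(ε * V (q + σ ε * y))) * p (q + σ ε * y) - p q
        - σ ε * y * deriv p q| ≤ 2 * Cp * CV * ε + M * D * ε * y^2 := by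
      have hsplit : Real.exp (-(ε * V (q + σ ε * y))) * p (q + σ ε * y) - p q
          - σ ε * y * deriv p q
          = p (q + σ ε * y) * (Real.exp (-(ε * V (q + σ ε * y))) - 1)
            + (p (q + σ ε * y) - p q - σ ε * y * deriv p q) := by ring
      rw [hsplit]
      exact le_trans (abs_add_le _ _) (add_le_add hterm1 hterm2)
    calc (1/ε) * (c * Real.exp (-(1/2) * y^2)) *
        |Real.exp (-(ε * V (q + σ ε * y))) * p (q + σ ε * y) - p q - σ ε * y * deriv p q|
        ≤ (1/ε) * (c * Real.exp (-(1/2) * y^2)) * (2 * Cp * CV * ε + M * D * ε * y^2) :=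
          mul_le_mul_of_nonneg_left htri (by positivity)
      _ = bound y := by simp only [hbd]; field_simp; ring
  -- dominated convergence
  have hdom : Tendsto (fun ε => ∫ y : ℝ, F ε y) (𝓝[>] (0:ℝ)) (𝓝 (∫ y : ℝ, L y)) :=
    tendsto_integral_filter_of_dominated_convergence bound
      (Eventually.of_forall hFmeas) h_bound hboundint (Eventually.of_forall h_lim)
  -- value of the limit integral
  have hLval : ∫ y : ℝ, L y = D / 2 * deriv (deriv p) q - V q * p q := by
    have h1 : Integrable (fun y : ℝ =>
        (c * (D/2 * deriv (deriv p) q)) * (y^2 * Real.exp (-(1/2) * y^2))) :=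
      integrable_sq_mul_exp_half.const_mul _
    have h2' : Integrable (fun y : ℝ => (c * (V q * p q)) * Real.exp (-(1/2) * y^2)) :=
      integrable_exp_half.const_mul _
    have heq : (fun y : ℝ => L y)
        = fun y => (c * (D/2 * deriv (deriv p) q)) * (y^2 * Real.exp (-(1/2) * y^2))
          - (c * (V q * p q)) * Real.exp (-(1/2) * y^2) := by
      funext y; simp only [hL]; ring
    rw [heq, integral_sub h1 h2', integral_const_mul, integral_const_mul,
      integral_sq_mul_exp_half, integral_exp_half]
    rw [show c * (D/2 * deriv (deriv p) q) * Real.sqrt (2*π) - c * (V q * p q) * Real.sqrt (2*π)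
        = (c * Real.sqrt (2*π)) * (D/2 * deriv (deriv p) q - V q * p q) from by ring,
      hcsqrt, one_mul]
  rw [← hLval]
  -- key identity between the two expressions, for ε > 0
  refine Tendsto.congr' ?_ hdom
  filter_upwards [self_mem_nhdsWithin] with ε hε
  have hεpos : (0:ℝ) < ε := hε
  have hεne : (ε:ℝ) ≠ 0 := ne_of_gt hεpos
  have hσpos : 0 < σ ε := Real.sqrt_pos.mpr (mul_pos hD hεpos)
  have hσsq : (σ ε)^2 = D * ε := by
    rw [hσ]; simp only; exact Real.sq_sqrt (mul_pos hD hεpos).le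
  set s : ℝ := σ ε with hs
  have hrpow : (2*π*D*ε) ^ (-(1:ℝ)/2) = (Real.sqrt (2*π*D*ε))⁻¹ := by
    rw [show (-(1:ℝ)/2) = -(1/2) from by norm_num, Real.rpow_neg (by positivity),
      Real.sqrt_eq_rpow]
  have hsqrtsplit : Real.sqrt (2*π*D*ε) = Real.sqrt (2*π) * s := by
    rw [show (2:ℝ)*π*D*ε = (2*π)*(D*ε) from by ring, Real.sqrt_mul (by positivity), hs, hσ]
  set g : ℝ → ℝ := fun u => Real.exp (-(q - u) ^ 2 / (2 * D * ε)) *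
      Real.exp (-(ε * V u)) * p u with hg
  have hcov : ∫ u : ℝ, g u = s * ∫ y : ℝ, g (q + s * y) := by
    have h1 := MeasureTheory.Measure.integral_comp_mul_left (fun z => g (q + z)) s
    have h2' := MeasureTheory.integral_add_left_eq_self (μ := volume) g q
    rw [h2'] at h1
    rw [h1, abs_inv, abs_of_pos hσpos, smul_eq_mul]
    field_simp
  set f1 : ℝ → ℝ := fun y => (c * Real.exp (-(1/2) * y^2) *
      Real.exp (-(ε * V (q + s * y)))) * p (q + s * y) with hf1
  set f2 : ℝ → ℝ := fun y => (c * p q) * Real.exp (-(1/2) * y^2)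
      + (c * s * deriv p q) * (y * Real.exp (-(1/2) * y^2)) with hf2
  have hcs : HasCompactSupport (fun y : ℝ => p (q + s * y)) := by
    have := hsupp.comp_homeomorph ((Homeomorph.mulLeft₀ s hσpos.ne').trans (Homeomorph.addLeft q))
    simpa [Function.comp_def, Homeomorph.trans_apply] using this
  have hf1cont : Continuous f1 := by
    have c0 : Continuous fun y : ℝ => q + s * y :=
      continuous_const.add (continuous_const.mul continuous_id)
    have cE : Continuous fun y : ℝ => Real.exp (-(ε * V (q + s * y))) :=
      Real.continuous_exp.comp ((continuous_const.mul (hV.comp c0)).neg)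
    have cG : Continuous fun y : ℝ => Real.exp (-(1/2) * y^2) :=
      Real.continuous_exp.comp (continuous_const.mul (continuous_pow 2))
    exact ((continuous_const.mul cG).mul cE).mul (hp.continuous.comp c0)
  have hF1int : Integrable f1 := hf1cont.integrable_of_hasCompactSupport (hcs.mul_left)
  have hF2int : Integrable f2 :=
    (integrable_exp_half.const_mul _).add (integrable_id_mul_exp_half.const_mul _)
  have hif2 : ∫ y : ℝ, f2 y = p q := by
    simp only [hf2]
    rw [integral_add ((integrable_exp_half.const_mul _))
      ((integrable_id_mul_exp_half.const_mul _)), integral_const_mul, integral_const_mul,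
      integral_exp_half, integral_id_mul_exp_half]
    rw [mul_zero, add_zero, show c * p q * Real.sqrt (2*π) = (c * Real.sqrt (2*π)) * p q
      from by ring, hcsqrt, one_mul]
  have hFsplit : ∫ y : ℝ, F ε y = (1/ε) * ((∫ y : ℝ, f1 y) - ∫ y : ℝ, f2 y) := by
    rw [← integral_sub hF1int hF2int, ← integral_const_mul]
    congr 1
    funext y
    simp only [hF, hf1, hf2, hs]
    ring
  have hptw : ∀ y : ℝ, c * g (q + s * y) = f1 y := by
    intro y
    simp only [hg, hf1]
    have harg : -(q - (q + s * y)) ^ 2 / (2 * D * ε) = -(1/2) * y^2 := by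
      rw [show (q - (q + s * y))^2 = s^2 * y^2 from by ring, hσsq]
      field_simp
    rw [harg]
    ring
  have hlhs : (2*π*D*ε) ^ (-(1:ℝ)/2) * (∫ u : ℝ, g u) = ∫ y : ℝ, f1 y := by
    rw [hrpow, hsqrtsplit, hcov]
    rw [show (Real.sqrt (2*π) * s)⁻¹ * (s * ∫ y : ℝ, g (q + s * y))
        = c * ∫ y : ℝ, g (q + s * y) from by
      rw [hc, mul_inv]
      field_simp]
    rw [← integral_const_mul]
    congr 1
    funext y
    exact hptw y
  rw [hFsplit, hif2, ← hlhs]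
end

section
/- Let 𝔸 be a complete normed unital algebra over ℝ and let A, B ∈ 𝔸 be such that the commutator C = A·B − B·A commutes with both A and B. Then exp(A)·exp(B) = exp(A + B + (1/2)·C); equivalently exp(A + B) = exp(A)·exp(B)·exp(−(1/2)·C). -/
open NormedSpace

section aux
variable {𝔸 : Type*} [NormedRing 𝔸] [NormedAlgebra ℝ 𝔸] [CompleteSpace 𝔸]

lemma bch_const_of_hasDerivAt_zero {E : Type*} [NormedAddCommGroup E] [NormedSpace ℝ E]
    {f : ℝ → E} (h : ∀ t, HasDerivAt f 0 t) (a b : ℝ) : f a = f b := by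
  apply is_const_of_fderiv_eq_zero (𝕜 := ℝ) (fun t => (h t).differentiableAt)
  intro x
  have hf : HasFDerivAt f ((1 : ℝ →L[ℝ] ℝ).smulRight (0 : E)) x := h x
  rw [hf.fderiv]
  ext
  simp

lemma bch_exp_mul_exp_neg (X : 𝔸) : exp X * exp (-X) = 1 := by
  letI : NormedAlgebra ℚ 𝔸 := NormedAlgebra.restrictScalars ℚ ℝ 𝔸
  rw [← exp_add_of_commute (Commute.refl X).neg_right, add_neg_cancel, exp_zero]

lemma bch_exp_neg_mul_exp (X : 𝔸) : exp (-X) * exp X = 1 := by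
  letI : NormedAlgebra ℚ 𝔸 := NormedAlgebra.restrictScalars ℚ ℝ 𝔸
  rw [← exp_add_of_commute (Commute.refl X).neg_left, neg_add_cancel, exp_zero]

lemma bch_exp_conj (X Y : 𝔸) (h : Commute (X * Y - Y * X) X) :
    exp X * Y = Y * exp X + (X * Y - Y * X) * exp X := by
  set D := X * Y - Y * X with hD
  have key : ∀ t : ℝ, HasDerivAt
      (fun t : ℝ => exp (t • X) * Y * exp (t • (-X)) - t • D) 0 t := by
    intro t
    have d1 := hasDerivAt_exp_smul_const (𝕂 := ℝ) X t
    have d2 := hasDerivAt_exp_smul_const' (𝕂 := ℝ) (-X) t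
    have dD : HasDerivAt (fun t : ℝ => t • D) D t := by
      simpa using (hasDerivAt_id t).smul_const D
    have := ((d1.mul_const Y).mul d2).sub dD
    refine this.congr_deriv (Eq.symm ?_)
    have hE : exp (t • X) * exp (t • (-X)) = 1 := by
      rw [smul_neg, bch_exp_mul_exp_neg]
    have hcomm : D * exp (t • X) = exp (t • X) * D :=
      ((h.smul_right t).exp_right).eq
    have hXE : exp (t • X) * X = X * exp (t • X) :=
      (((Commute.refl X).smul_right t).exp_right).eq.symm
    calc (0 : 𝔸) = D * (exp (t • X) * exp (t • (-X))) - D := by rw [hE, mul_one, sub_self]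
      _ = exp (t • X) * D * exp (t • (-X)) - D := by rw [← mul_assoc, hcomm]
      _ = exp (t • X) * X * Y * exp (t • (-X))
          + exp (t • X) * Y * (-X * exp (t • (-X))) - D := by
        rw [hD]; noncomm_ring
      _ = _ := by rw [smul_neg]
  have h01 := bch_const_of_hasDerivAt_zero key 1 0
  simp only [one_smul, zero_smul, sub_zero] at h01
  rw [exp_zero, mul_one, one_mul, sub_eq_iff_eq_add'] at h01
  have := congrArg (· * exp X) h01
  rw [mul_assoc, mul_assoc, bch_exp_neg_mul_exp, mul_one] at this
  rw [this, add_mul, add_comm]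

lemma bch_alg {R : Type*} [Ring R] (A B D e1 e2 e3 e4 : R)
    (hA1 : A * e1 = e1 * A)
    (hB2 : B * e2 = e2 * B - D * e2)
    (hB3 : B * e3 = e3 * B)
    (hB4 : B * e4 = e4 * B)
    (hD2 : D * e2 = e2 * D)
    (hD3 : D * e3 = e3 * D) :
    ((-A * e1 * e2 + e1 * ((A + B) * e2)) * e3 + e1 * e2 * (e3 * D)) * e4
      + e1 * e2 * e3 * (e4 * -B) = 0 := by
  have step1 : ((-A * e1 * e2 + e1 * ((A + B) * e2)) * e3 + e1 * e2 * (e3 * D)) * e4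
      + e1 * e2 * e3 * (e4 * -B)
      = (e1 * A - A * e1) * (e2 * (e3 * e4)) + e1 * (B * e2 * (e3 * e4))
        + e1 * e2 * (e3 * D * e4) - e1 * e2 * (e3 * (e4 * B)) := by noncomm_ring
  rw [step1, hA1, sub_self, zero_mul, zero_add, hB2, ← hB4]
  have step2 : e1 * ((e2 * B - D * e2) * (e3 * e4)) + e1 * e2 * (e3 * D * e4)
      - e1 * e2 * (e3 * (B * e4))
      = e1 * e2 * ((B * e3 - e3 * B) * e4) + e1 * ((e2 * D - D * e2) * (e3 * e4))
        + e1 * e2 * ((e3 * D - D * e3) * e4) := by noncomm_ring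
  rw [step2, hB3, hD2, hD3]
  simp
end aux

/-- Baker–Campbell–Hausdorff formula in Weyl form: in a real Banach
algebra, if the commutator `C = A B - B A` commutes with both `A` and `B`, then
`exp(A) exp(B) = exp(A + B + (1/2) C)`. -/
theorem exp_mul_exp_of_commutator_central
    {𝔸 : Type*} [NormedRing 𝔸] [NormedAlgebra ℝ 𝔸] [CompleteSpace 𝔸]
    (A B : 𝔸) (h1 : Commute (A * B - B * A) A) (h2 : Commute (A * B - B * A) B) :
    exp A * exp B = exp (A + B + (1 / 2 : ℝ) • (A * B - B * A)) := by
  set C := A * B - B * A with hC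
  have hCAB : Commute C (A + B) := h1.add_right h2
  have key : ∀ t : ℝ, HasDerivAt (fun t : ℝ =>
      exp (t • (-A)) * exp (t • (A + B)) * exp ((t ^ 2 / 2) • C) * exp (t • (-B)))
      0 t := by
    intro t
    have d1 := hasDerivAt_exp_smul_const' (𝕂 := ℝ) (-A) t
    have d2 := hasDerivAt_exp_smul_const' (𝕂 := ℝ) (A + B) t
    have d4 := hasDerivAt_exp_smul_const (𝕂 := ℝ) (-B) t
    have dsq : HasDerivAt (fun t : ℝ => t ^ 2 / 2) t t := by
      have := (hasDerivAt_pow 2 t).div_const 2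
      refine this.congr_deriv (Eq.symm ?_)
      push_cast
      ring
    have d3 : HasDerivAt (fun u : ℝ => exp ((u ^ 2 / 2) • C))
        (exp ((t ^ 2 / 2) • C) * (t • C)) t := by
      have := (hasDerivAt_exp_smul_const (𝕂 := ℝ) C (t ^ 2 / 2)).scomp t dsq
      refine this.congr_deriv (Eq.symm ?_)
      rw [mul_smul_comm]
    have total := ((d1.mul d2).mul d3).mul d4
    refine total.congr_deriv (Eq.symm ?_)
    symm
    -- now apply bch_alg
    apply bch_alg A B (t • C)
    · exact (((Commute.refl A).neg_right.smul_right t).exp_right).eq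
    · -- B * E2 = E2 * B - (t•C) * E2
      have hXY : (t • (A + B)) * B - B * (t • (A + B)) = t • C := by
        rw [smul_mul_assoc, mul_smul_comm, ← smul_sub]
        congr 1
        rw [hC]; noncomm_ring
      have hc : Commute ((t • (A + B)) * B - B * (t • (A + B))) (t • (A + B)) := by
        rw [hXY]; exact (hCAB.smul_left t).smul_right t
      have := bch_exp_conj (t • (A + B)) B hc
      rw [hXY] at this
      rw [eq_sub_iff_add_eq, ← this]
    · exact ((h2.symm.smul_right _).exp_right).eq
    · exact (((Commute.refl B).neg_right.smul_right t).exp_right).eq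
    · exact ((((hCAB.smul_left t).smul_right t).exp_right).eq)
    · exact ((((Commute.refl C).smul_right _).smul_left t).exp_right).eq
  have h01 := bch_const_of_hasDerivAt_zero key 1 0
  simp only [one_smul, zero_smul, exp_zero, mul_one, one_mul, one_pow] at h01
  norm_num at h01
  -- h01 : exp(-A) * exp(A+B) * exp((1/2)•C) * exp(-B) = 1
  have expand : exp A * (exp (-A) * exp (A + B) * exp ((1/2 : ℝ) • C) * exp (-B))
      * exp B = exp (A + B) * exp ((1/2 : ℝ) • C) := by
    calc _ = (exp A * exp (-A)) * (exp (A + B) * exp ((1/2 : ℝ) • C))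
        * (exp (-B) * exp B) := by noncomm_ring
      _ = _ := by rw [bch_exp_mul_exp_neg, bch_exp_neg_mul_exp, one_mul, mul_one]
  have step : exp A * exp B
      = exp A * (exp (-A) * exp (A + B) * exp ((1/2 : ℝ) • C) * exp (-B))
        * exp B := by
    rw [h01, mul_one]
  letI : NormedAlgebra ℚ 𝔸 := NormedAlgebra.restrictScalars ℚ ℝ 𝔸
  rw [step, exp_add_of_commute (hCAB.symm.smul_right ((1:ℝ)/2))]
  exact expand
end
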